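/- arXiv:2202.05238 — 2 statements merged into one kernel-verified Lean document; each statement's English description precedes it below -/
import Mathlib

section
/- A self-complementary score sequence (s_1, ..., s_n) of length n is not strong if and only if there exists an integer i with 1 ≤ i ≤ ⌊n/2⌋ such that (s_1, ..., s_i) is a strong score sequence of length i, (s_{i+1}-i, ..., s_{n-i}-i) is a self-complementary score sequence of length n-2i, and s_{n+1-j} = n-1-s_j for 1 ≤ j ≤ i; moreover, such an index i is unique. (Here the empty sequence of length 0 and every sequence of length 1 count as self-complementary score sequences.) -/
lemma choose_two_succ (m : ℕ) : (m+1).choose 2 = m.choose 2 + m := by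
  rw [Nat.choose_succ_succ]; simp [Nat.choose_one_right]; omega

lemma choose_two_add (a b : ℕ) : (a+b).choose 2 = a.choose 2 + b.choose 2 + a*b := by
  induction b with
  | zero => simp
  | succ b ih =>
    rw [← Nat.add_assoc, choose_two_succ, choose_two_succ, ih, Nat.mul_succ]; ring

lemma two_mul_choose_two (r : ℕ) : 2 * r.choose 2 = r * (r-1) := by
  induction r with
  | zero => simp
  | succ r ih =>
    rw [choose_two_succ, Nat.mul_add, ih, Nat.succ_sub_one]
    cases r with
    | zero => simp
    | succ r => simp only [Nat.add_sub_cancel_left, Nat.add_sub_cancel]; ring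

lemma sum_map_sub (L : List ℕ) (c : ℤ) :
    (L.map (fun (x:ℕ) => (x:ℤ) - c)).sum = (L.sum : ℤ) - L.length * c := by
  induction L with
  | nil => simp
  | cons a L ih =>
    simp only [List.map_cons, List.sum_cons, List.length_cons, ih]; push_cast; ring

lemma sum_take_add (l : List ℕ) (a r : ℕ) :
    (l.take (a+r)).sum = (l.take a).sum + ((l.drop a).take r).sum := by
  rw [List.take_add, List.sum_append]

lemma M_eq (L : List ℕ) (c : ℤ) :
    List.map (fun (x:ℤ) => x - c) (Bind.bind L (fun (a:ℕ) => Pure.pure ((a:ℕ):ℤ)))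
    = L.map (fun (x:ℕ) => (x:ℤ) - c) := by
  induction L with
  | nil => rfl
  | cons a L ih => simp_all [List.bind_eq_flatMap]

/-- A score sequence of length `n`: nondecreasing, partial sums `≥ C(r,2)` for `1 ≤ r < n`,
and total sum `C(n,2)`. -/
def IsScoreSeq (l : List ℕ) : Prop :=
  l.Pairwise (· ≤ ·) ∧
  (∀ r, 1 ≤ r → r < l.length → r.choose 2 ≤ (l.take r).sum) ∧
  l.sum = l.length.choose 2

/-- A sequence of length `n` is self-complementary if `s_{n+1-i} = n-1-s_i`
for all `1 ≤ i ≤ ⌊n/2⌋` (here `l.getD (i-1) 0` is the `i`-th term `s_i`). -/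
def IsSelfCompl (l : List ℕ) : Prop :=
  ∀ i, 1 ≤ i → i ≤ l.length / 2 →
    ((l.getD (l.length - i) 0 : ℤ)) = (l.length : ℤ) - 1 - (l.getD (i - 1) 0 : ℤ)

/-- A strong score sequence of length `n`: nondecreasing, partial sums `> C(r,2)` for
`1 ≤ r < n`, and total sum `C(n,2)`. -/
def IsStrongScoreSeq (l : List ℕ) : Prop :=
  l.Pairwise (· ≤ ·) ∧
  (∀ r, 1 ≤ r → r < l.length → r.choose 2 < (l.take r).sum) ∧
  l.sum = l.length.choose 2

/-- A score sequence, for sequences of integers: all terms nonnegative, nondecreasing,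
partial sums `≥ C(r,2)` for `1 ≤ r < n`, and total sum `C(n,2)`. -/
def IsScoreSeqZ (l : List ℤ) : Prop :=
  (∀ x ∈ l, 0 ≤ x) ∧ l.Pairwise (· ≤ ·) ∧
  (∀ r, 1 ≤ r → r < l.length → (r.choose 2 : ℤ) ≤ (l.take r).sum) ∧
  l.sum = (l.length.choose 2 : ℤ)

/-- A sequence of integers of length `n` is self-complementary if
`s_{n+1-i} = n - 1 - s_i` for all `1 ≤ i ≤ ⌊n/2⌋`. -/
def IsSelfComplZ (l : List ℤ) : Prop :=
  ∀ i, 1 ≤ i → i ≤ l.length / 2 →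
    l.getD (l.length - i) 0 = (l.length : ℤ) - 1 - l.getD (i - 1) 0

/-- `SelfComplDecomp l i` says: `1 ≤ i ≤ ⌊n/2⌋`, the first `i` terms of `l` form a strong
score sequence of length `i`, the middle `n - 2i` terms, each decreased by `i`, form a
self-complementary score sequence of length `n - 2i` (for `n - 2i = 0` this is the empty
score sequence, which counts as self-complementary), and the last `i` terms are the
complements of the first `i` terms: `s_{n+1-j} = n - 1 - s_j` for `1 ≤ j ≤ i`. -/
def SelfComplDecomp (l : List ℕ) (i : ℕ) : Prop :=
  1 ≤ i ∧ i ≤ l.length / 2 ∧ IsStrongScoreSeq (l.take i) ∧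
  IsScoreSeqZ (((l.drop i).take (l.length - 2 * i)).map (fun x => (x : ℤ) - (i : ℤ))) ∧
  IsSelfComplZ (((l.drop i).take (l.length - 2 * i)).map (fun x => (x : ℤ) - (i : ℤ))) ∧
  ∀ j, 1 ≤ j → j ≤ i →
    ((l.getD (l.length - j) 0 : ℤ)) = (l.length : ℤ) - 1 - (l.getD (j - 1) 0 : ℤ)


lemma compl_sum (l : List ℕ) (hsc : IsSelfCompl l) (r : ℕ) (hr : r ≤ l.length / 2) :
    ((l.drop (l.length - r)).sum : ℤ) = r * ((l.length : ℤ) - 1) - ((l.take r).sum : ℤ) := by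
  induction r with
  | zero => simp
  | succ r ih =>
    have hn2 : 2 ≤ l.length := by omega
    have h1 : l.length - (r+1) < l.length := by omega
    have h2 : l.length - (r+1) + 1 = l.length - r := by omega
    have hrl : r < l.length := by omega
    rw [List.drop_eq_getElem_cons h1, h2]
    have hc := hsc (r+1) (by omega) hr
    simp only [Nat.add_sub_cancel] at hc
    have e1 : ((l.getD (l.length-(r+1)) 0 : ℕ) : ℤ) = ((l[l.length-(r+1)]'h1 : ℕ) : ℤ) := by
      rw [List.getD_eq_getElem l 0 h1]
    have e2 : ((l.getD r 0 : ℕ) : ℤ) = ((l[r]'hrl : ℕ) : ℤ) := by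
      rw [List.getD_eq_getElem l 0 hrl]
    have ht : (l.take (r+1)).sum = (l.take r).sum + l[r] := List.sum_take_succ l r hrl
    have ihr := ih (by omega)
    push_cast [ht]
    push_cast at ihr hc e1 e2
    simp only [List.map_cons, List.sum_cons]
    linarith [ihr, hc, e1, e2]

lemma mid_getD (l : List ℕ) (i m k : ℕ) (hm : i + m ≤ l.length) (hk : k < m) :
    (((l.drop i).take m).map (fun (x:ℕ) => (x : ℤ) - (i : ℤ))).getD k 0
      = (l.getD (i+k) 0 : ℤ) - (i:ℤ) := by
  have h1 : k < (((l.drop i).take m).map (fun (x:ℕ) => (x : ℤ) - (i : ℤ))).length := by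
    simp; omega
  rw [List.getD_eq_getElem _ _ h1, List.getD_eq_getElem l 0 (by omega : i+k < l.length)]
  simp

lemma mid_sorted (l : List ℕ) (i m : ℕ) (hs : l.Pairwise (· ≤ ·)) :
    (((l.drop i).take m).map (fun (x:ℕ) => (x : ℤ) - (i : ℤ))).Pairwise (· ≤ ·) := by
  apply List.Pairwise.map
  · intro a b hab; simp; exact_mod_cast hab
  · exact List.Pairwise.sublist ((List.take_sublist m (l.drop i)).trans (List.drop_sublist i l)) hs

/-- Construction of the decomposition at the minimal equality index. -/
lemma decomp_of_min (l : List ℕ) (hsort : l.Pairwise (· ≤ ·))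
    (hpart : ∀ r, 1 ≤ r → r < l.length → r.choose 2 ≤ (l.take r).sum)
    (hsum : l.sum = l.length.choose 2) (hsc : IsSelfCompl l)
    (i : ℕ) (hi1 : 1 ≤ i) (hiln : i < l.length)
    (hieq : (l.take i).sum = i.choose 2)
    (hmin : ∀ r, 1 ≤ r → r < i → r.choose 2 < (l.take r).sum)
    (hi2 : i ≤ l.length / 2) :
    SelfComplDecomp l i := by
  unfold SelfComplDecomp
  rw [M_eq]
  have hil : i ≤ l.length := by omega
  set m := l.length - 2*i with hm
  have hMlen : (((l.drop i).take m).map (fun (x:ℕ) => (x:ℤ) - (i:ℤ))).length = m := by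
    simp only [List.length_map, List.length_take, List.length_drop]
    omega
  have hMsum : ∀ r, r ≤ m →
      ((((l.drop i).take m).map (fun (x:ℕ) => (x:ℤ) - (i:ℤ))).take r).sum
        = ((l.take (i+r)).sum : ℤ) - ((l.take i).sum : ℤ) - (r:ℤ) * (i:ℤ) := by
    intro r hr
    rw [← List.map_take, List.take_take, Nat.min_eq_left hr, sum_map_sub]
    have hlt : ((l.drop i).take r).length = r := by
      simp only [List.length_take, List.length_drop]; omega
    have hadd := sum_take_add l i r
    rw [hlt]
    push_cast at hadd ⊢
    linarith [hadd]
  have hgi : 1 ≤ m → (i:ℕ) ≤ l.getD i 0 := by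
    intro hm1
    have hilt : i < l.length := by omega
    have h1 : (l.take (i+1)).sum = (l.take i).sum + l[i] := List.sum_take_succ l i hilt
    have h2 : (i+1).choose 2 ≤ (l.take (i+1)).sum := hpart (i+1) (by omega) (by omega)
    rw [List.getD_eq_getElem l 0 hilt]
    have h3 := choose_two_succ i
    omega
  have hge : ∀ k, k < m → (i:ℕ) ≤ l.getD (i+k) 0 := by
    intro k hk
    have hik : i + k < l.length := by omega
    have hilt : i < l.length := by omega
    have hle : l[i] ≤ l[i+k] := by
      rcases Nat.eq_zero_or_pos k with h|h
      · subst h; simp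
      · exact List.pairwise_iff_getElem.1 hsort i (i+k) hilt hik (by omega)
    rw [List.getD_eq_getElem l 0 hik]
    have h5 := hgi (by omega)
    rw [List.getD_eq_getElem l 0 hilt] at h5
    omega
  refine ⟨hi1, hi2, ?_, ⟨?_, mid_sorted l i m hsort, ?_, ?_⟩, ?_, ?_⟩
  · -- strong (take i)
    refine ⟨List.Pairwise.sublist (List.take_sublist i l) hsort, ?_, ?_⟩
    · intro r h1 h2
      have h2' : r < i := by
        simp only [List.length_take] at h2; omega
      rw [List.take_take, Nat.min_eq_left (by omega)]
      exact hmin r h1 h2'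
    · rw [List.length_take, Nat.min_eq_left hil, hieq]
  · -- nonneg
    intro x hx
    obtain ⟨k, hk, rfl⟩ := List.mem_iff_getElem.1 hx
    have hk' : k < m := by rwa [hMlen] at hk
    have hg := mid_getD l i m k (by omega) hk'
    rw [List.getD_eq_getElem _ _ hk] at hg
    rw [hg]
    have := hge k hk'
    omega
  · -- partial sums
    intro r h1 h2
    rw [hMlen] at h2
    rw [hMsum r (by omega)]
    have hirn : i + r < l.length := by omega
    have hp := hpart (i+r) (by omega) hirn
    have hc := choose_two_add i r
    push_cast at hp hc ⊢
    nlinarith [hp, hc, hieq]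
  · -- total sum
    have hMl : (((l.drop i).take m).map (fun (x:ℕ) => (x:ℤ) - (i:ℤ))).sum
        = ((((l.drop i).take m).map (fun (x:ℕ) => (x:ℤ) - (i:ℤ))).take m).sum := by
      rw [List.take_of_length_le hMlen.le]
    rw [hMl, hMsum m le_rfl, hMlen]
    have hcs := compl_sum l hsc i hi2
    have hdi : l.length - i = i + m := by omega
    rw [hdi] at hcs
    have htot2 : (l.take (i+m)).sum + (l.drop (i+m)).sum = l.sum := by
      rw [← List.sum_append, List.take_append_drop]
    have hca : l.length.choose 2 = i.choose 2 + (m+i).choose 2 + i*(m+i) := by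
      rw [← choose_two_add]; congr 1; omega
    have hcb : (m+i).choose 2 = m.choose 2 + i.choose 2 + m*i := choose_two_add m i
    have h2i : 2 * i.choose 2 = i * (i-1) := two_mul_choose_two i
    have hlen3 : l.length = 2*i + m := by omega
    have htot2' : ((l.take (i+m)).sum : ℤ) + ((l.drop (i+m)).sum : ℤ) = (l.sum : ℤ) := by
      exact_mod_cast htot2
    have hsum' : ((l.sum : ℕ) : ℤ) = ((l.length.choose 2 : ℕ) : ℤ) := by exact_mod_cast hsum
    have hca' : ((l.length.choose 2 : ℕ) : ℤ)
        = ((i.choose 2 : ℕ) : ℤ) + (((m+i).choose 2 : ℕ) : ℤ) + (i:ℤ)*((m:ℤ)+(i:ℤ)) := by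
      push_cast [hca]; ring
    have hcb' : (((m+i).choose 2 : ℕ) : ℤ)
        = ((m.choose 2 : ℕ) : ℤ) + ((i.choose 2 : ℕ) : ℤ) + (m:ℤ)*(i:ℤ) := by
      push_cast [hcb]; ring
    have h2i' : 2 * ((i.choose 2 : ℕ) : ℤ) = (i:ℤ)*(i:ℤ) - (i:ℤ) := by
      have h := h2i
      zify [hi1] at h
      linarith [h]
    have hlen3' : (l.length : ℤ) = 2*(i:ℤ) + (m:ℤ) := by exact_mod_cast hlen3
    linear_combination htot2' - hcs + hsum' + hca' + hcb' + h2i' - (i:ℤ)*hlen3'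
  · -- self-complementary middle
    intro j hj1 hj2
    rw [hMlen] at hj2 ⊢
    have hm1 : 1 ≤ m := by omega
    have hjm : j ≤ m := by omega
    rw [mid_getD l i m (m - j) (by omega) (by omega),
        mid_getD l i m (j-1) (by omega) (by omega)]
    have he1 : i + (m - j) = l.length - (i + j) := by omega
    have he2 : i + (j - 1) = (i + j) - 1 := by omega
    rw [he1, he2]
    have hs := hsc (i+j) (by omega) (by omega)
    omega
  · -- complement of first part
    intro j hj1 hji
    exact hsc j hj1 (by omega)

/-- A self-complementary score sequence of length `n` fails to be strong iff it decomposes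
as a strong score sequence of length `i`, a self-complementary score sequence of length
`n - 2i` shifted up by `i`, and the complement of the initial part, for some
`1 ≤ i ≤ ⌊n/2⌋`; moreover such an index `i` is unique. -/
theorem selfcompl_not_strong_decomposition (n : ℕ) (l : List ℕ) (hlen : l.length = n)
    (hseq : IsScoreSeq l) (hsc : IsSelfCompl l) :
    (¬ IsStrongScoreSeq l ↔ ∃ i, SelfComplDecomp l i) ∧
    (∀ i j, SelfComplDecomp l i → SelfComplDecomp l j → i = j) := by
  subst hlen
  obtain ⟨hsort, hpart, hsum⟩ := hseq
  have decompFacts : ∀ i, SelfComplDecomp l i →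
      (l.take i).sum = i.choose 2 ∧ (∀ r, 1 ≤ r → r < i → r.choose 2 < (l.take r).sum)
      ∧ 1 ≤ i ∧ i ≤ l.length / 2 := by
    rintro i ⟨hi1, hi2, hstr, -, -, -⟩
    have hil : i ≤ l.length := by omega
    have hlt : (l.take i).length = i := by
      rw [List.length_take, Nat.min_eq_left hil]
    refine ⟨?_, ?_, hi1, hi2⟩
    · have h := hstr.2.2; rwa [hlt] at h
    · intro r h1 h2
      have h := hstr.2.1 r h1 (by omega)
      rwa [List.take_take, Nat.min_eq_left (by omega)] at h
  constructor
  · constructor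
    · -- not strong → decomposition
      intro hns
      classical
      have hex : ∃ r, 1 ≤ r ∧ r < l.length ∧ (l.take r).sum = r.choose 2 := by
        by_contra h
        push_neg at h
        exact hns ⟨hsort, fun r h1 h2 =>
          lt_of_le_of_ne (hpart r h1 h2) (fun he => (h r h1 h2) he.symm), hsum⟩
      obtain ⟨hi1, hiln, hieq⟩ := Nat.find_spec hex
      set i := Nat.find hex with hidef
      have hmin : ∀ r, 1 ≤ r → r < i → r.choose 2 < (l.take r).sum := by
        intro r h1 h2
        have hne : (l.take r).sum ≠ r.choose 2 := fun he =>
          Nat.find_min hex h2 ⟨h1, by omega, he⟩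
        exact lt_of_le_of_ne (hpart r h1 (by omega)) (Ne.symm hne)
      have hi2 : i ≤ l.length / 2 := by
        by_contra hgt
        push_neg at hgt
        set r := l.length - i with hr
        have hr1 : 1 ≤ r := by omega
        have hrhalf : r ≤ l.length / 2 := by omega
        have hri : r < i := by omega
        have hcs := compl_sum l hsc r hrhalf
        have hdi : l.length - r = i := by omega
        rw [hdi] at hcs
        have htot : ((l.take i).sum : ℤ) + ((l.drop i).sum : ℤ) = (l.sum : ℤ) := by
          exact_mod_cast congrArg (Nat.cast : ℕ → ℤ)
            (by rw [← List.sum_append, List.take_append_drop] :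
              (l.take i).sum + (l.drop i).sum = l.sum)
        have hca : l.length.choose 2 = r.choose 2 + i.choose 2 + r*i := by
          rw [← choose_two_add]; congr 1; omega
        have hca' : ((l.length.choose 2 : ℕ) : ℤ)
            = ((r.choose 2 : ℕ) : ℤ) + ((i.choose 2 : ℕ) : ℤ) + (r:ℤ)*(i:ℤ) := by
          push_cast [hca]; ring
        have h2c' : 2 * ((r.choose 2 : ℕ) : ℤ) = (r:ℤ)*(r:ℤ) - (r:ℤ) := by
          have h := two_mul_choose_two r
          zify [hr1] at h
          linarith [h]
        have hsum' : ((l.sum : ℕ) : ℤ) = ((l.length.choose 2 : ℕ) : ℤ) := by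
          exact_mod_cast hsum
        have hieq' : ((l.take i).sum : ℤ) = ((i.choose 2 : ℕ) : ℤ) := by exact_mod_cast hieq
        have hlen2' : (l.length : ℤ) = (i:ℤ) + (r:ℤ) := by
          have : l.length = i + r := by omega
          exact_mod_cast this
        have hfin : ((l.take r).sum : ℤ) = ((r.choose 2 : ℕ) : ℤ) := by
          linear_combination hcs - htot - hsum' + hieq' - hca' - h2c' + (r:ℤ)*hlen2'
        have hfin' : (l.take r).sum = r.choose 2 := by exact_mod_cast hfin
        exact absurd hfin' (fun he => Nat.find_min hex hri ⟨hr1, by omega, he⟩)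
      exact ⟨i, decomp_of_min l hsort hpart hsum hsc i hi1 hiln hieq hmin hi2⟩
    · -- decomposition → not strong
      rintro ⟨i, hd⟩ hstrong
      obtain ⟨hieq, hlt, hi1, hi2⟩ := decompFacts i hd
      have hiln : i < l.length := by omega
      have h := hstrong.2.1 i hi1 hiln
      omega
  · -- uniqueness
    intro i j hdi hdj
    obtain ⟨hieq, hlti, hi1, hi2⟩ := decompFacts i hdi
    obtain ⟨hjeq, hltj, hj1, hj2⟩ := decompFacts j hdj
    rcases lt_trichotomy i j with h|h|h
    · have := hltj i hi1 h; omega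
    · exact h
    · have := hlti j hj1 h; omega
end

section
/- For every m ≥ 1, the map sending a self-complementary score sequence (s_1, ..., s_{2m+1}) of length 2m+1 to its first m terms (s_1, ..., s_m) is a bijection onto the set of nondecreasing sequences (s_1 ≤ ... ≤ s_m) of nonnegative integers satisfying ∑_{i=1}^r s_i ≥ C(r,2) for all 1 ≤ r < m, s_m ≤ m, and m·s_m ≥ ∑_{i=1}^m s_i ≥ C(m,2). -/
private lemma choose_two_mul (n : ℕ) : 2 * n.choose 2 = n * (n - 1) := by
  induction n with
  | zero => simp
  | succ k ih =>
    rw [Nat.choose_succ_succ, Nat.choose_one_right]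
    rcases k with _ | j
    · simp
    · simp only [Nat.succ_sub_one] at *
      ring_nf; ring_nf at ih; omega

private lemma sum_map_sub_s19 (c : ℕ) : ∀ (t : List ℕ), (∀ x ∈ t, x ≤ c) →
    (t.map (fun x => c - x)).sum + t.sum = c * t.length
  | [], _ => by simp
  | a :: t, h => by
    have ih := sum_map_sub_s19 c t (fun x hx => h x (List.mem_cons_of_mem _ hx))
    have ha := h a List.mem_cons_self
    simp only [List.map_cons, List.sum_cons, List.length_cons, Nat.mul_succ]
    omega

private lemma key_choose (m k : ℕ) (h : k < m) :
    (m + 1 + k).choose 2 = (m - k).choose 2 + 2 * (m * k) + m := by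
  obtain ⟨j, rfl⟩ : ∃ j, m = k + 1 + j := ⟨m - k - 1, by omega⟩
  have a := choose_two_mul (k + 1 + j + 1 + k)
  have b := choose_two_mul (j + 1)
  rw [show k + 1 + j + 1 + k - 1 = k + 1 + j + k from by omega] at a
  rw [show j + 1 - 1 = j from rfl] at b
  rw [show k + 1 + j - k = j + 1 from by omega]
  have c : 2 * ((j + 1).choose 2) + (4 * ((k + 1 + j) * k) + 2 * (k + 1 + j))
      = (k + 1 + j + 1 + k) * (k + 1 + j + k) := by rw [b]; ring
  linarith [a, c]

private def scExt (m : ℕ) (t : List ℕ) : List ℕ :=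
  t ++ m :: (t.map (fun x => 2 * m - x)).reverse

private lemma source_eq (m : ℕ) (hm : 1 ≤ m) {l : List ℕ}
    (hlen : l.length = 2 * m + 1) (hsc : IsScoreSeq l) (hcomp : IsSelfCompl l) :
    l.getD m 0 = m ∧ l = scExt m (l.take m) := by
  obtain ⟨hsort, hps, hsum⟩ := hsc
  rw [hlen] at hsum
  -- complementarity in getD form
  have key : ∀ i j, i + j = 2 * m → j < m →
      l.getD i 0 = 2 * m - l.getD j 0 ∧ l.getD j 0 ≤ 2 * m := by
    intro i j hij hj
    have h := hcomp (j + 1) (by omega) (by rw [hlen]; omega)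
    rw [hlen] at h
    rw [show 2 * m + 1 - (j + 1) = i from by omega,
        show j + 1 - 1 = j from rfl] at h
    constructor <;> omega
  have hbd : ∀ x ∈ l.take m, x ≤ 2 * m := by
    intro x hx
    obtain ⟨i, hi, rfl⟩ := List.mem_iff_getElem.1 hx
    have him : i < m := by simp [hlen] at hi; omega
    rw [List.getElem_take, ← List.getD_eq_getElem l 0 (by omega)]
    exact (key (2 * m - i) i (by omega) him).2
  have hdrop : l.drop (m + 1) = ((l.take m).map (fun x => 2 * m - x)).reverse := by
    apply List.ext_getElem
    · simp [hlen]; omega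
    · intro j h1 h2
      have hjm : j < m := by simp [hlen] at h1; omega
      have hA : (List.map (fun x => 2 * m - x) (List.take m l)).length = m := by
        simp [hlen]; omega
      rw [List.getElem_drop, List.getElem_reverse, List.getElem_map, List.getElem_take]
      simp only [hA]
      rw [← List.getD_eq_getElem l 0 (by omega), ← List.getD_eq_getElem l 0 (by omega)]
      exact (key (m + 1 + j) (m - 1 - j) (by omega) (by omega)).1
  -- decompose l
  have hL : l = l.take m ++ l.getD m 0 :: l.drop (m + 1) := by
    conv_lhs => rw [← List.take_append_drop m l]
    congr 1
    rw [List.drop_eq_getElem_cons (by omega), List.getD_eq_getElem l 0 (by omega)]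
  have hmapsum := sum_map_sub_s19 (2 * m) (l.take m) hbd
  rw [List.length_take, min_eq_left (by omega)] at hmapsum
  have hsum2 : (l.take m).sum + (l.getD m 0 + ((l.take m).map (fun x => 2 * m - x)).sum)
      = (2 * m + 1).choose 2 := by
    rw [← hsum]
    conv_rhs => rw [hL]
    rw [List.sum_append, List.sum_cons, hdrop, List.sum_reverse]
  have hc := choose_two_mul (2 * m + 1)
  rw [show 2 * m + 1 - 1 = 2 * m from rfl] at hc
  have e1 : (2 * m + 1) * (2 * m) = 4 * (m * m) + 2 * m := by ring
  have hmid : l.getD m 0 = m := by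
    have h2 : 2 * m * m = 2 * (m * m) := by ring
    linarith [hsum2, hmapsum, hc, e1, h2]
  refine ⟨hmid, ?_⟩
  conv_lhs => rw [hL]
  unfold scExt
  rw [hmid, hdrop]

private lemma maps_target (m : ℕ) (hm : 1 ≤ m) {l : List ℕ}
    (hlen : l.length = 2 * m + 1) (hsc : IsScoreSeq l) (hcomp : IsSelfCompl l) :
    (l.take m).length = m ∧ (l.take m).Pairwise (· ≤ ·) ∧
      (∀ r, 1 ≤ r → r < m → r.choose 2 ≤ ((l.take m).take r).sum) ∧
      (l.take m).getD (m - 1) 0 ≤ m ∧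
      m.choose 2 ≤ (l.take m).sum ∧ (l.take m).sum ≤ m * (l.take m).getD (m - 1) 0 := by
  obtain ⟨hmid, _⟩ := source_eq m hm hlen hsc hcomp
  obtain ⟨hsort, hps, hsum⟩ := hsc
  have hlt : (l.take m).length = m := by simp [hlen]; omega
  have hsort' : (l.take m).Pairwise (· ≤ ·) :=
    List.Pairwise.sublist (List.take_sublist m l) hsort
  have hpair := List.pairwise_iff_getElem.1 hsort
  -- last entry of the prefix
  have hgd : (l.take m).getD (m - 1) 0 = l[m - 1]'(by omega) := by
    rw [List.getD_eq_getElem _ 0 (by omega), List.getElem_take]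
  have hlast : (l.take m).getD (m - 1) 0 ≤ m := by
    rw [hgd]
    have h2 := hpair (m - 1) m (by omega) (by omega) (by omega)
    have h3 : l[m]'(by omega) = m := by
      rw [← List.getD_eq_getElem l 0 (show m < l.length by omega)]; exact hmid
    omega
  refine ⟨hlt, hsort', ?_, hlast, ?_, ?_⟩
  · intro r h1 h2
    rw [List.take_take, min_eq_left (by omega)]
    exact hps r h1 (by omega)
  · exact hps m hm (by omega)
  · have hb : ∀ x ∈ l.take m, x ≤ (l.take m).getD (m - 1) 0 := by
      intro x hx
      obtain ⟨i, hi, rfl⟩ := List.mem_iff_getElem.1 hx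
      have him : i < m := by simp [hlen] at hi; omega
      rw [List.getElem_take, hgd]
      rcases eq_or_lt_of_le (by omega : i ≤ m - 1) with h | h
      · subst h; exact le_rfl
      · exact hpair i (m - 1) (by omega) (by omega) h
    have := List.sum_le_card_nsmul (l.take m) _ hb
    rwa [hlt, smul_eq_mul] at this


private lemma scExt_getD_low (m : ℕ) {t : List ℕ} (hlen : t.length = m)
    {j : ℕ} (hj : j < m) : (scExt m t).getD j 0 = t.getD j 0 := by
  unfold scExt
  exact List.getD_append t ((m : ℕ) :: (t.map (fun x => 2 * m - x)).reverse) 0 j (by omega)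

private lemma scExt_getD_high (m : ℕ) (hm : 1 ≤ m) {t : List ℕ} (hlen : t.length = m)
    {i : ℕ} (h1 : 1 ≤ i) (him : i ≤ m) :
    (scExt m t).getD (2 * m + 1 - i) 0 = 2 * m - t.getD (i - 1) 0 := by
  unfold scExt
  rw [List.getD_append_right t ((m : ℕ) :: (t.map (fun x => 2 * m - x)).reverse)
        0 (2 * m + 1 - i) (by omega),
      show 2 * m + 1 - i - t.length = (m - i) + 1 from by omega,
      List.getD_cons_succ,
      List.getD_eq_getElem ((t.map (fun x => 2 * m - x)).reverse) 0
        (by simp only [List.length_reverse, List.length_map, hlen]; omega),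
      List.getElem_reverse, List.getElem_map]
  simp only [List.length_map, hlen, show m - 1 - (m - i) = i - 1 from by omega]
  rw [List.getD_eq_getElem t 0 (by omega)]

set_option maxHeartbeats 2000000 in
private lemma ext_mem (m : ℕ) (hm : 1 ≤ m) {t : List ℕ}
    (hlen : t.length = m) (hsort : t.Pairwise (· ≤ ·))
    (hps : ∀ r, 1 ≤ r → r < m → r.choose 2 ≤ (t.take r).sum)
    (hlast : t.getD (m - 1) 0 ≤ m) (hsum1 : m.choose 2 ≤ t.sum) :
    (scExt m t).length = 2 * m + 1 ∧ IsScoreSeq (scExt m t) ∧ IsSelfCompl (scExt m t) := by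
  have hpair := List.pairwise_iff_getElem.1 hsort
  have hgd : t.getD (m - 1) 0 = t[m - 1]'(by omega) :=
    List.getD_eq_getElem t 0 (by omega)
  have helem : ∀ x ∈ t, x ≤ m := by
    intro x hx
    obtain ⟨i, hi, rfl⟩ := List.mem_iff_getElem.1 hx
    have him : i < m := by omega
    rcases eq_or_lt_of_le (by omega : i ≤ m - 1) with h | h
    · subst h; omega
    · have := hpair i (m - 1) (by omega) (by omega) h
      omega
  have hmap := sum_map_sub_s19 (2 * m) t (fun x hx => by have := helem x hx; omega)
  rw [hlen] at hmap
  have hrevmem : ∀ b ∈ (t.map (fun x => 2 * m - x)).reverse, m ≤ b := by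
    intro b hb
    rw [List.mem_reverse, List.mem_map] at hb
    obtain ⟨x, hx, rfl⟩ := hb
    have := helem x hx
    omega
  have hslen : (scExt m t).length = 2 * m + 1 := by simp [scExt, hlen]; omega
  have hsorted : (scExt m t).Pairwise (· ≤ ·) := by
    rw [scExt, List.pairwise_append]
    refine ⟨hsort, ?_, ?_⟩
    · rw [List.pairwise_cons]
      refine ⟨hrevmem, ?_⟩
      rw [List.pairwise_reverse, List.pairwise_map]
      exact hsort.imp (by intro a b h; simp; omega) |>.imp (fun h => h)
    · intro a ha b hb
      have ham := helem a ha
      have : a ≤ t.getD (m - 1) 0 := by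
        obtain ⟨i, hi, rfl⟩ := List.mem_iff_getElem.1 ha
        rcases eq_or_lt_of_le (by omega : i ≤ m - 1) with h | h
        · subst h; omega
        · have := hpair i (m - 1) (by omega) (by omega) h; omega
      rcases List.mem_cons.1 hb with rfl | hb
      · omega
      · have := hrevmem b hb; omega
  have hsum : (scExt m t).sum = (2 * m + 1).choose 2 := by
    rw [scExt, List.sum_append, List.sum_cons, List.sum_reverse]
    have hc := choose_two_mul (2 * m + 1)
    rw [show 2 * m + 1 - 1 = 2 * m from rfl] at hc
    have e1 : (2 * m + 1) * (2 * m) = 4 * (m * m) + 2 * m := by ring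
    have e2 : 2 * m * m = 2 * (m * m) := by ring
    linarith
  refine ⟨hslen, ⟨hsorted, ?_, by rw [hslen]; exact hsum⟩, ?_⟩
  · -- partial sums
    intro r h1 h2
    rw [hslen] at h2
    rcases le_or_gt r m with hr | hr
    · rw [scExt, List.take_append_of_le_length (by omega)]
      rcases eq_or_lt_of_le hr with rfl | hrm
      · rw [List.take_of_length_le (by omega)]; exact hsum1
      · exact hps r h1 hrm
    · obtain ⟨k, rfl⟩ : ∃ k, r = m + (1 + k) := ⟨r - m - 1, by omega⟩
      have hkm : k < m := by omega
      have htap := List.take_length_add_append (l₁ := t) (l₂ := (m : ℕ) :: (t.map (fun x => 2 * m - x)).reverse) (1 + k)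
      rw [hlen] at htap
      rw [scExt, htap, show 1 + k = k + 1 from by omega, List.take_succ_cons,
        List.sum_append, List.sum_cons]
      -- sum of the first k elements of the reversed complement
      have htr : List.take k (t.map (fun x => 2 * m - x)).reverse
          = (List.drop (m - k) (t.map (fun x => 2 * m - x))).reverse := by
        rw [List.take_reverse, List.length_map, hlen]
      have hmd : List.drop (m - k) (t.map (fun x => 2 * m - x))
          = (t.drop (m - k)).map (fun x => 2 * m - x) := (List.map_drop (l := t)).symm
      have hdl : (t.drop (m - k)).length = k := by rw [List.length_drop, hlen]; omega
      have hmap2 := sum_map_sub_s19 (2 * m) (t.drop (m - k))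
        (fun x hx => by have := helem x (List.mem_of_mem_drop hx); omega)
      rw [hdl] at hmap2
      have hsplit := List.sum_take_add_sum_drop t (m - k)
      have htk : (m - k).choose 2 ≤ (t.take (m - k)).sum := by
        rcases Nat.eq_zero_or_pos k with h0 | hkpos
        · rw [h0, Nat.sub_zero, List.take_of_length_le (by omega)]
          exact hsum1
        · exact hps (m - k) (by omega) (by omega)
      have hkey := key_choose m k hkm
      rw [show m + (k + 1) = m + 1 + k from by omega, htr, List.sum_reverse, hmd]
      have e3 : 2 * m * k = 2 * (m * k) := by ring
      linarith
  · -- self-complementary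
    intro i h1 h2
    rw [hslen] at h2 ⊢
    have him : i ≤ m := by omega
    rw [scExt_getD_high m hm hlen h1 him, scExt_getD_low m hlen (show i - 1 < m by omega)]
    have hb : t.getD (i - 1) 0 ≤ m := by
      rw [List.getD_eq_getElem t 0 (by omega)]
      exact helem _ (List.getElem_mem _)
    push_cast
    omega

/-- For `m ≥ 1`, taking the first `m` terms is a bijection from the set of
self-complementary score sequences of length `2m+1` onto the set of nondecreasing
sequences `(s_1 ≤ ⋯ ≤ s_m)` of nonnegative integers with `∑_{i=1}^r s_i ≥ C(r,2)` for
`1 ≤ r < m`, `s_m ≤ m`, and `m·s_m ≥ ∑_{i=1}^m s_i ≥ C(m,2)`. -/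
theorem selfcompl_odd_half_bijection (m : ℕ) (hm : 1 ≤ m) :
    Set.BijOn (fun l : List ℕ => l.take m)
      {l : List ℕ | l.length = 2 * m + 1 ∧ IsScoreSeq l ∧ IsSelfCompl l}
      {l : List ℕ | l.length = m ∧ l.Pairwise (· ≤ ·) ∧
        (∀ r, 1 ≤ r → r < m → r.choose 2 ≤ (l.take r).sum) ∧
        l.getD (m - 1) 0 ≤ m ∧
        m.choose 2 ≤ l.sum ∧ l.sum ≤ m * l.getD (m - 1) 0} := by
  refine ⟨?_, ?_, ?_⟩
  · intro l hl
    obtain ⟨hlen, hsc, hcomp⟩ := hl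
    exact maps_target m hm hlen hsc hcomp
  · intro l₁ h₁ l₂ h₂ heq
    obtain ⟨hlen₁, hsc₁, hcomp₁⟩ := h₁
    obtain ⟨hlen₂, hsc₂, hcomp₂⟩ := h₂
    have e₁ := (source_eq m hm hlen₁ hsc₁ hcomp₁).2
    have e₂ := (source_eq m hm hlen₂ hsc₂ hcomp₂).2
    simp only at heq
    rw [e₁, e₂, heq]
  · intro t ht
    obtain ⟨hlen, hsort, hps, hlast, hsum1, -⟩ := ht
    refine ⟨scExt m t, ext_mem m hm hlen hsort hps hlast hsum1, ?_⟩
    show (scExt m t).take m = t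
    unfold scExt
    rw [← hlen, List.take_left]
end
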